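/- If two deterministic finite automata recognise the same language, then the equality of their matricial evaluations u·M*·v = s·N*·t is derivable in Kleene algebra, where (u,M,v) and (s,N,t) are the matrix representations of the two DFAs over regular expressions. -/

import Mathlib

structure IsKleeneAlgebra {X : Type*} (add mul : X → X → X) (star : X → X)
    (one zero : X) : Prop where
  add_assoc : ∀ x y z, add (add x y) z = add x (add y z)
  add_comm : ∀ x y, add x y = add y x
  add_idem : ∀ x, add x x = x
  add_zero : ∀ x, add x zero = x
  mul_assoc : ∀ x y z, mul (mul x y) z = mul x (mul y z)
  one_mul : ∀ x, mul one x = x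
  mul_one : ∀ x, mul x one = x
  zero_mul : ∀ x, mul zero x = zero
  mul_zero : ∀ x, mul x zero = zero
  left_distrib : ∀ x y z, mul x (add y z) = add (mul x y) (mul x z)
  right_distrib : ∀ x y z, mul (add x y) z = add (mul x z) (mul y z)
  star_unfold : ∀ x, add (add one (mul x (star x))) (star x) = star x
  star_ind_left : ∀ x y, add (mul y x) x = x → add (mul (star y) x) x = x
  star_ind_right : ∀ x y, add (mul x y) x = x → add (mul x (star y)) x = x

inductive Regex (A : Type) : Type
  | zero : Regex A
  | one : Regex A
  | letter : A → Regex A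
  | plus : Regex A → Regex A → Regex A
  | mul : Regex A → Regex A → Regex A
  | star : Regex A → Regex A

def Regex.eval {A : Type} {X : Type*} [KleeneAlgebra X] (σ : A → X) :
    Regex A → X
  | .zero => 0
  | .one => 1
  | .letter p => σ p
  | .plus x y => x.eval σ + y.eval σ
  | .mul x y => x.eval σ * y.eval σ
  | .star x => KStar.kstar (x.eval σ)

/-- KA-provable equality: `x = y` holds in every Kleene algebra under
every interpretation. -/
def KAEquiv {A : Type} (x y : Regex A) : Prop :=
  ∀ (X : Type) [KleeneAlgebra X] (σ : A → X), x.eval σ = y.eval σ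

instance regexSetoid (A : Type) : Setoid (Regex A) :=
  ⟨KAEquiv, fun _ _ _ _ => rfl,
   fun h X _ σ => (h X σ).symm,
   fun h1 h2 X _ σ => (h1 X σ).trans (h2 X σ)⟩

/-- Regular expressions modulo KA-provable equality. -/
def RegexQ (A : Type) := Quotient (regexSetoid A)

def RegexQ.zero {A : Type} : RegexQ A := ⟦Regex.zero⟧
def RegexQ.one {A : Type} : RegexQ A := ⟦Regex.one⟧

def RegexQ.add {A : Type} : RegexQ A → RegexQ A → RegexQ A :=
  Quotient.map₂ Regex.plus (fun _ _ h1 _ _ h2 X _ σ => by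
    simp [Regex.eval, h1 X σ, h2 X σ])

def RegexQ.mul {A : Type} : RegexQ A → RegexQ A → RegexQ A :=
  Quotient.map₂ Regex.mul (fun _ _ h1 _ _ h2 X _ σ => by
    simp [Regex.eval, h1 X σ, h2 X σ])

def RegexQ.sum {A : Type} (l : List (RegexQ A)) : RegexQ A :=
  l.foldr RegexQ.add RegexQ.zero

/-- Matrix addition over `RegexQ`. -/
def mAdd {A : Type} {ι κ : Type} (M N : Matrix ι κ (RegexQ A)) :
    Matrix ι κ (RegexQ A) :=
  Matrix.of fun i j => (M i j).add (N i j)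

/-- Matrix multiplication over `RegexQ`. -/
noncomputable def mMul {A : Type} {ι κ l : Type} [Fintype κ] (M : Matrix ι κ (RegexQ A))
    (N : Matrix κ l (RegexQ A)) : Matrix ι l (RegexQ A) :=
  Matrix.of fun i j => RegexQ.sum ((Finset.univ.toList (α := κ)).map fun k => (M i k).mul (N k j))

def mId {A : Type} (ι : Type) [DecidableEq ι] : Matrix ι ι (RegexQ A) :=
  Matrix.of fun i j => if i = j then RegexQ.one else RegexQ.zero

def mZero {A : Type} (ι κ : Type) : Matrix ι κ (RegexQ A) :=
  Matrix.of fun _ _ => RegexQ.zero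

/-- The 0-1 initial row vector of a DFA. -/
def dfaU {A : Type} {n : ℕ} (start : Fin n) : Matrix (Fin 1) (Fin n) (RegexQ A) :=
  Matrix.of fun _ j => if j = start then RegexQ.one else RegexQ.zero

/-- The transition matrix of a DFA: entry (i,j) is the sum of the letters
leading from state i to state j, so that each row contains exactly one
occurrence of each letter. -/
noncomputable def dfaM {A : Type} [Fintype A] {n : ℕ} (step : Fin n → A → Fin n) :
    Matrix (Fin n) (Fin n) (RegexQ A) :=
  Matrix.of fun i j =>
    RegexQ.sum (((Finset.univ.filter fun p => step i p = j).toList).map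
      fun p => ⟦Regex.letter p⟧)

/-- The 0-1 accepting column vector of a DFA. -/
def dfaV {A : Type} {n : ℕ} (accept : Fin n → Bool) :
    Matrix (Fin n) (Fin 1) (RegexQ A) :=
  Matrix.of fun i _ => if accept i then RegexQ.one else RegexQ.zero

/-- The word accepted relation of a DFA. -/
def dfaAccepts {A : Type} {n : ℕ} (step : Fin n → A → Fin n) (start : Fin n)
    (accept : Fin n → Bool) (w : List A) : Prop :=
  accept (w.foldl step start) = true


namespace RegexQ
variable {A : Type}

instance : Zero (RegexQ A) := ⟨RegexQ.zero⟩
instance : One (RegexQ A) := ⟨RegexQ.one⟩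
instance : Add (RegexQ A) := ⟨RegexQ.add⟩
instance : Mul (RegexQ A) := ⟨RegexQ.mul⟩

def star : RegexQ A → RegexQ A :=
  Quotient.map Regex.star (fun _ _ h X _ σ => by simp [Regex.eval, h X σ])

instance : KStar (RegexQ A) := ⟨RegexQ.star⟩

def mk (x : Regex A) : RegexQ A := ⟦x⟧

lemma mk_add (x y : Regex A) : mk x + mk y = mk (x.plus y) := rfl
lemma mk_mul (x y : Regex A) : mk x * mk y = mk (x.mul y) := rfl
lemma mk_star (x : Regex A) : KStar.kstar (mk x) = mk x.star := rfl
lemma zero_def : (0 : RegexQ A) = mk Regex.zero := rfl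
lemma one_def : (1 : RegexQ A) = mk Regex.one := rfl

lemma sound' {x y : Regex A} (h : KAEquiv x y) : mk x = mk y := Quotient.sound h
lemma exact' {x y : Regex A} (h : mk (A := A) x = mk y) : KAEquiv x y := Quotient.exact h

lemma ind' {motive : RegexQ A → Prop} (h : ∀ x : Regex A, motive (mk x)) : ∀ q, motive q :=
  fun q => Quotient.inductionOn q h

instance : Semiring (RegexQ A) where
  add_assoc := ind' fun x => ind' fun y => ind' fun z =>
    sound' fun X _ σ => by simp [Regex.eval, add_assoc]
  add_comm := ind' fun x => ind' fun y =>
    sound' fun X _ σ => by simp [Regex.eval, add_comm]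
  zero_add := ind' fun x => sound' fun X _ σ => by simp [Regex.eval]
  add_zero := ind' fun x => sound' fun X _ σ => by simp [Regex.eval]
  nsmul := nsmulRec
  mul_assoc := ind' fun x => ind' fun y => ind' fun z =>
    sound' fun X _ σ => by simp [Regex.eval, mul_assoc]
  one_mul := ind' fun x => sound' fun X _ σ => by simp [Regex.eval]
  mul_one := ind' fun x => sound' fun X _ σ => by simp [Regex.eval]
  zero_mul := ind' fun x => sound' fun X _ σ => by simp [Regex.eval]
  mul_zero := ind' fun x => sound' fun X _ σ => by simp [Regex.eval]
  left_distrib := ind' fun x => ind' fun y => ind' fun z =>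
    sound' fun X _ σ => by simp [Regex.eval, left_distrib]
  right_distrib := ind' fun x => ind' fun y => ind' fun z =>
    sound' fun X _ σ => by simp [Regex.eval, right_distrib]

instance : IdemSemiring (RegexQ A) :=
  IdemSemiring.ofSemiring (ind' fun x => by
    rw [show (mk x + mk x : RegexQ A) = mk (x.plus x) from rfl]
    exact sound' fun X _ σ => by simp [Regex.eval, add_idem])

lemma mk_le_mk {x y : Regex A} : mk (A := A) x ≤ mk y ↔ KAEquiv (x.plus y) y :=
  ⟨fun h => exact' ((mk_add x y) ▸ h.add_eq_right),
   fun h => add_eq_right_iff_le.mp ((mk_add x y) ▸ sound' h)⟩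

instance : KleeneAlgebra (RegexQ A) where
  one_le_kstar := ind' fun a => by
    rw [one_def, mk_star, mk_le_mk]
    exact fun X _ σ => by
      simpa [Regex.eval] using (one_le_kstar (a := a.eval σ)).add_eq_right
  mul_kstar_le_kstar := ind' fun a => by
    rw [mk_star, mk_mul, mk_le_mk]
    exact fun X _ σ => by
      simpa [Regex.eval] using (mul_kstar_le_kstar (a := a.eval σ)).add_eq_right
  kstar_mul_le_kstar := ind' fun a => by
    rw [mk_star, mk_mul, mk_le_mk]
    exact fun X _ σ => by
      simpa [Regex.eval] using (kstar_mul_le_kstar (a := a.eval σ)).add_eq_right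
  mul_kstar_le_self := ind' fun a => ind' fun b => fun h => by
    rw [mk_mul, mk_le_mk] at h
    rw [mk_star, mk_mul, mk_le_mk]
    intro X _ σ
    have h' : b.eval σ * a.eval σ ≤ b.eval σ := by
      have := h X σ; simp [Regex.eval] at this
      exact add_eq_right_iff_le.mp this
    simpa [Regex.eval] using (mul_kstar_le_self h').add_eq_right
  kstar_mul_le_self := ind' fun a => ind' fun b => fun h => by
    rw [mk_mul, mk_le_mk] at h
    rw [mk_star, mk_mul, mk_le_mk]
    intro X _ σ
    have h' : a.eval σ * b.eval σ ≤ b.eval σ := by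
      have := h X σ; simp [Regex.eval] at this
      exact add_eq_right_iff_le.mp this
    simpa [Regex.eval] using (kstar_mul_le_self h').add_eq_right

end RegexQ
section Bridge

variable {A : Type}

lemma RegexQ.sum_eq (l : List (RegexQ A)) : RegexQ.sum l = l.sum := by
  induction l with
  | nil => rfl
  | cons a l ih =>
      show a + RegexQ.sum l = _
      rw [ih, List.sum_cons]

lemma mMul_eq {ι κ l : Type} [Fintype κ] (M : Matrix ι κ (RegexQ A))
    (N : Matrix κ l (RegexQ A)) : mMul M N = M * N := by
  ext i j
  show RegexQ.sum _ = _
  rw [RegexQ.sum_eq, Finset.sum_map_toList, Matrix.mul_apply]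
  rfl

lemma mAdd_eq {ι κ : Type} (M N : Matrix ι κ (RegexQ A)) : mAdd M N = M + N := rfl

lemma mId_eq {ι : Type} [DecidableEq ι] : mId (A := A) ι = 1 := by
  ext i j
  by_cases h : i = j <;> simp [mId, Matrix.one_apply, h] <;> rfl

lemma dfaM_apply [Fintype A] {n : ℕ} (step : Fin n → A → Fin n) (i j : Fin n) :
    dfaM (A := A) step i j
      = ∑ a ∈ Finset.univ.filter (fun p => step i p = j), RegexQ.mk (Regex.letter a) := by
  show RegexQ.sum _ = _
  rw [RegexQ.sum_eq]
  exact Finset.sum_map_toList _ (fun a => RegexQ.mk (Regex.letter a))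

lemma dfaU_apply {n : ℕ} (start : Fin n) (x : Fin 1) (j : Fin n) :
    dfaU (A := A) start x j = if j = start then 1 else 0 := rfl

lemma dfaV_apply {n : ℕ} (accept : Fin n → Bool) (i : Fin n) (x : Fin 1) :
    dfaV (A := A) accept i x = if accept i then 1 else 0 := rfl

/-- Entrywise order on matrices over `RegexQ`. -/
def MLE {ι κ : Type} (X Y : Matrix ι κ (RegexQ A)) : Prop := X + Y = Y

lemma mle_iff {ι κ : Type} {X Y : Matrix ι κ (RegexQ A)} :
    MLE X Y ↔ ∀ i j, X i j ≤ Y i j := by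
  constructor
  · intro h i j
    have := congrFun (congrFun h i) j
    rw [Matrix.add_apply] at this
    exact add_eq_right_iff_le.mp this
  · intro h
    ext i j
    rw [Matrix.add_apply]
    exact (h i j).add_eq_right

lemma mle_refl {ι κ : Type} (X : Matrix ι κ (RegexQ A)) : MLE X X :=
  mle_iff.mpr fun _ _ => le_rfl

lemma mle_trans {ι κ : Type} {X Y Z : Matrix ι κ (RegexQ A)} (h1 : MLE X Y) (h2 : MLE Y Z) :
    MLE X Z :=
  mle_iff.mpr fun i j => (mle_iff.mp h1 i j).trans (mle_iff.mp h2 i j)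

lemma mle_antisymm {ι κ : Type} {X Y : Matrix ι κ (RegexQ A)} (h1 : MLE X Y) (h2 : MLE Y X) :
    X = Y := by
  ext i j
  exact le_antisymm (mle_iff.mp h1 i j) (mle_iff.mp h2 i j)

lemma mle_add_left {ι κ : Type} (X Y : Matrix ι κ (RegexQ A)) : MLE X (X + Y) :=
  mle_iff.mpr fun i j => by rw [Matrix.add_apply]; exact le_self_add

lemma mle_add_right {ι κ : Type} (X Y : Matrix ι κ (RegexQ A)) : MLE Y (X + Y) :=
  mle_iff.mpr fun i j => by rw [Matrix.add_apply]; exact le_add_self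

lemma mle_mul_left {ι κ l : Type} [Fintype κ] {X Y : Matrix κ l (RegexQ A)}
    (Z : Matrix ι κ (RegexQ A)) (h : MLE X Y) : MLE (Z * X) (Z * Y) := by
  show Z * X + Z * Y = Z * Y
  rw [← Matrix.mul_add, h]

lemma mle_mul_right {ι κ l : Type} [Fintype κ] {X Y : Matrix ι κ (RegexQ A)}
    (Z : Matrix κ l (RegexQ A)) (h : MLE X Y) : MLE (X * Z) (Y * Z) := by
  show X * Z + Y * Z = Y * Z
  rw [← Matrix.add_mul, h]

end Bridge

section KAfacts

variable {A : Type} {n m : ℕ}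
  {S : Matrix (Fin n) (Fin n) (RegexQ A) → Matrix (Fin n) (Fin n) (RegexQ A)}
  (hS : IsKleeneAlgebra mAdd mMul S (mId (Fin n)) (mZero (Fin n) (Fin n)))

include hS

lemma S_unfold (M : Matrix (Fin n) (Fin n) (RegexQ A)) :
    (1 + M * S M) + S M = S M := by
  have := hS.star_unfold M
  rwa [mAdd_eq, mAdd_eq, mMul_eq, mId_eq] at this

lemma one_le_S (M : Matrix (Fin n) (Fin n) (RegexQ A)) : MLE 1 (S M) :=
  mle_trans (mle_add_left 1 (M * S M)) (S_unfold hS M)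

lemma mul_S_le (M : Matrix (Fin n) (Fin n) (RegexQ A)) : MLE (M * S M) (S M) :=
  mle_trans (mle_add_right 1 (M * S M)) (S_unfold hS M)

lemma S_ind_left {M x : Matrix (Fin n) (Fin n) (RegexQ A)} (h : MLE (M * x) x) :
    MLE (S M * x) x := by
  have h' := hS.star_ind_left x M (by rw [mAdd_eq, mMul_eq]; exact h)
  rwa [mAdd_eq, mMul_eq] at h'

lemma S_mul_S_le (M : Matrix (Fin n) (Fin n) (RegexQ A)) : MLE (S M * S M) (S M) :=
  S_ind_left hS (mul_S_le hS M)

lemma le_S (M : Matrix (Fin n) (Fin n) (RegexQ A)) : MLE M (S M) := by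
  have h1 : MLE (M * 1) (M * S M) := mle_mul_left M (one_le_S hS M)
  rw [mul_one] at h1
  exact mle_trans h1 (mul_S_le hS M)

lemma S_mul_le (M : Matrix (Fin n) (Fin n) (RegexQ A)) : MLE (S M * M) (S M) :=
  mle_trans (mle_mul_left (S M) (le_S hS M)) (S_mul_S_le hS M)

omit hS

/-- Rectangular star induction on the right, obtained from the square one
by replicating rows. -/
lemma rect_ind_right
    {S₂ : Matrix (Fin m) (Fin m) (RegexQ A) → Matrix (Fin m) (Fin m) (RegexQ A)}
    (hS₂ : IsKleeneAlgebra mAdd mMul S₂ (mId (Fin m)) (mZero (Fin m) (Fin m)))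
    {X : Matrix (Fin n) (Fin m) (RegexQ A)} {Y : Matrix (Fin m) (Fin m) (RegexQ A)}
    (h : MLE (X * Y) X) : MLE (X * S₂ Y) X := by
  rw [mle_iff]
  intro i j
  set R : Matrix (Fin m) (Fin m) (RegexQ A) := Matrix.of fun _ j' => X i j' with hR
  have hRmul : ∀ (Z : Matrix (Fin m) (Fin m) (RegexQ A)) (k j' : Fin m),
      (R * Z) k j' = (X * Z) i j' := by
    intro Z k j'
    rw [Matrix.mul_apply, Matrix.mul_apply]
    rfl
  have hhyp : mAdd (mMul R Y) R = R := by
    rw [mAdd_eq, mMul_eq]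
    ext k j'
    rw [Matrix.add_apply, hRmul]
    show (X * Y) i j' + X i j' = X i j'
    exact (mle_iff.mp h i j').add_eq_right
  have hcon := hS₂.star_ind_right R Y hhyp
  rw [mAdd_eq, mMul_eq] at hcon
  have := congrFun (congrFun hcon j) j
  rw [Matrix.add_apply, hRmul] at this
  exact add_eq_right_iff_le.mp this

end KAfacts
section Combinatorial

variable {A : Type}

lemma sum_le_of_forall {ι : Type} (s : Finset ι) (f : ι → RegexQ A) (c : RegexQ A)
    (h : ∀ i ∈ s, f i ≤ c) : ∑ i ∈ s, f i ≤ c := by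
  induction s using Finset.cons_induction with
  | empty => simpa using zero_le c
  | cons a s ha ih =>
      rw [Finset.sum_cons]
      exact add_le (h a (Finset.mem_cons_self a s))
        (ih fun i hi => h i (Finset.mem_cons.2 (Or.inr hi)))

open Classical in
/-- The 0-1 matrix of pairs of states reachable by a common word. -/
noncomputable def pairMat {n m : ℕ} (step₁ : Fin n → A → Fin n) (start₁ : Fin n)
    (step₂ : Fin m → A → Fin m) (start₂ : Fin m) : Matrix (Fin n) (Fin m) (RegexQ A) :=
  Matrix.of fun i j =>
    if (∃ w : List A, w.foldl step₁ start₁ = i ∧ w.foldl step₂ start₂ = j) then 1 else 0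

lemma pairMat_one {n m : ℕ} {step₁ : Fin n → A → Fin n} {start₁ : Fin n}
    {step₂ : Fin m → A → Fin m} {start₂ : Fin m} {i : Fin n} {j : Fin m}
    (h : ∃ w : List A, w.foldl step₁ start₁ = i ∧ w.foldl step₂ start₂ = j) :
    pairMat step₁ start₁ step₂ start₂ i j = 1 := by
  simp only [pairMat, Matrix.of_apply]
  rw [if_pos h]

lemma pairMat_zero {n m : ℕ} {step₁ : Fin n → A → Fin n} {start₁ : Fin n}
    {step₂ : Fin m → A → Fin m} {start₂ : Fin m} {i : Fin n} {j : Fin m}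
    (h : ¬ ∃ w : List A, w.foldl step₁ start₁ = i ∧ w.foldl step₂ start₂ = j) :
    pairMat step₁ start₁ step₂ start₂ i j = 0 := by
  simp only [pairMat, Matrix.of_apply]
  rw [if_neg h]

variable [Fintype A]

lemma FM_le_MF {n m : ℕ} (step₁ : Fin n → A → Fin n) (start₁ : Fin n)
    (step₂ : Fin m → A → Fin m) (start₂ : Fin m) :
    MLE (pairMat step₁ start₁ step₂ start₂ * dfaM step₂)
      (dfaM step₁ * pairMat step₁ start₁ step₂ start₂) := by
  rw [mle_iff]
  intro i j
  rw [Matrix.mul_apply]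
  apply sum_le_of_forall
  intro k _
  by_cases hw : ∃ w : List A, w.foldl step₁ start₁ = i ∧ w.foldl step₂ start₂ = k
  · obtain ⟨w, hw1, hw2⟩ := hw
    rw [pairMat_one ⟨w, hw1, hw2⟩, one_mul, dfaM_apply]
    apply sum_le_of_forall
    intro a ha
    have hstep : step₂ k a = j := (Finset.mem_filter.mp ha).2
    have h1 : RegexQ.mk (Regex.letter a) ≤ dfaM step₁ i (step₁ i a) := by
      rw [dfaM_apply]
      exact Finset.single_le_sum (f := fun b => RegexQ.mk (Regex.letter b))
        (fun _ _ => zero_le)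
        (Finset.mem_filter.mpr ⟨Finset.mem_univ a, rfl⟩)
    have h2 : (1 : RegexQ A) ≤ pairMat step₁ start₁ step₂ start₂ (step₁ i a) j := by
      rw [pairMat_one ⟨w ++ [a], by simp [List.foldl_append, hw1, hw2, hstep]⟩]
    calc RegexQ.mk (Regex.letter a)
        = RegexQ.mk (Regex.letter a) * 1 := (mul_one _).symm
      _ ≤ dfaM step₁ i (step₁ i a) * pairMat step₁ start₁ step₂ start₂ (step₁ i a) j :=
          mul_le_mul' h1 h2
      _ ≤ _ := by
          rw [Matrix.mul_apply]
          exact Finset.single_le_sum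
            (f := fun k' => dfaM step₁ i k' * pairMat step₁ start₁ step₂ start₂ k' j)
            (fun _ _ => zero_le) (Finset.mem_univ _)
  · rw [pairMat_zero hw, zero_mul]
    exact zero_le

lemma u_le_uF {n m : ℕ} (step₁ : Fin n → A → Fin n) (start₁ : Fin n)
    (step₂ : Fin m → A → Fin m) (start₂ : Fin m) :
    MLE (dfaU (A := A) start₂) (dfaU (A := A) start₁ * pairMat step₁ start₁ step₂ start₂) := by
  rw [mle_iff]
  intro x j
  rw [dfaU_apply]
  by_cases hj : j = start₂
  · rw [if_pos hj]
    have h1 : (1 : RegexQ A) ≤ dfaU start₁ x start₁ := by rw [dfaU_apply, if_pos rfl]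
    have h2 : (1 : RegexQ A) ≤ pairMat step₁ start₁ step₂ start₂ start₁ j := by
      rw [pairMat_one (i := start₁) (j := j) ⟨[], rfl, hj.symm⟩]
    calc (1 : RegexQ A) = 1 * 1 := (mul_one _).symm
      _ ≤ dfaU start₁ x start₁ * pairMat step₁ start₁ step₂ start₂ start₁ j :=
          mul_le_mul' h1 h2
      _ ≤ _ := by
          rw [Matrix.mul_apply]
          exact Finset.single_le_sum
            (f := fun k => dfaU start₁ x k * pairMat step₁ start₁ step₂ start₂ k j)
            (fun _ _ => zero_le) (Finset.mem_univ _)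
  · rw [if_neg hj]
    exact zero_le

lemma Fv_le_v {n m : ℕ} (step₁ : Fin n → A → Fin n) (start₁ : Fin n) (accept₁ : Fin n → Bool)
    (step₂ : Fin m → A → Fin m) (start₂ : Fin m) (accept₂ : Fin m → Bool)
    (hl : ∀ w : List A, dfaAccepts step₂ start₂ accept₂ w → dfaAccepts step₁ start₁ accept₁ w) :
    MLE (pairMat step₁ start₁ step₂ start₂ * dfaV (A := A) accept₂) (dfaV (A := A) accept₁) := by
  rw [mle_iff]
  intro i x
  rw [Matrix.mul_apply]
  apply sum_le_of_forall
  intro j _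
  by_cases hw : ∃ w : List A, w.foldl step₁ start₁ = i ∧ w.foldl step₂ start₂ = j
  · obtain ⟨w, hw1, hw2⟩ := hw
    rw [pairMat_one ⟨w, hw1, hw2⟩, one_mul, dfaV_apply, dfaV_apply]
    by_cases hacc : accept₂ j
    · have hacc1 : accept₁ i = true := by
        have := hl w (by rw [dfaAccepts, hw2]; exact hacc)
        rwa [dfaAccepts, hw1] at this
      rw [if_pos hacc, if_pos hacc1]
    · rw [if_neg hacc]
      exact zero_le
  · rw [pairMat_zero hw, zero_mul]
    exact zero_le

/-- The one-sided inequality between matricial evaluations. -/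
lemma key {n m : ℕ} (step₁ : Fin n → A → Fin n) (start₁ : Fin n) (accept₁ : Fin n → Bool)
    (step₂ : Fin m → A → Fin m) (start₂ : Fin m) (accept₂ : Fin m → Bool)
    (hl : ∀ w : List A, dfaAccepts step₂ start₂ accept₂ w → dfaAccepts step₁ start₁ accept₁ w)
    (S₁ : Matrix (Fin n) (Fin n) (RegexQ A) → Matrix (Fin n) (Fin n) (RegexQ A))
    (S₂ : Matrix (Fin m) (Fin m) (RegexQ A) → Matrix (Fin m) (Fin m) (RegexQ A))
    (hS₁ : IsKleeneAlgebra mAdd mMul S₁ (mId (Fin n)) (mZero (Fin n) (Fin n)))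
    (hS₂ : IsKleeneAlgebra mAdd mMul S₂ (mId (Fin m)) (mZero (Fin m) (Fin m))) :
    MLE (dfaU (A := A) start₂ * S₂ (dfaM step₂) * dfaV (A := A) accept₂)
      (dfaU (A := A) start₁ * S₁ (dfaM step₁) * dfaV (A := A) accept₁) := by
  set F := pairMat step₁ start₁ step₂ start₂ with hF
  set P := S₁ (dfaM step₁) with hP
  set Q := S₂ (dfaM step₂) with hQ
  -- F * Q ≤ P * F
  have hFQ : MLE (F * Q) (P * F) := by
    have hb : MLE ((P * F) * dfaM step₂) (P * F) := by
      have : MLE (P * (F * dfaM step₂)) (P * (dfaM step₁ * F)) :=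
        mle_mul_left P (FM_le_MF step₁ start₁ step₂ start₂)
      rw [← Matrix.mul_assoc, ← Matrix.mul_assoc] at this
      refine mle_trans this ?_
      exact mle_mul_right F (S_mul_le hS₁ (dfaM step₁))
    have hd : MLE ((P * F) * Q) (P * F) := rect_ind_right hS₂ hb
    have hc : MLE F (P * F) := by
      have := mle_mul_right (Z := F) (one_le_S hS₁ (dfaM step₁))
      rwa [Matrix.one_mul] at this
    exact mle_trans (mle_mul_right Q hc) hd
  -- chain
  have h1 : MLE (dfaU (A := A) start₂ * Q) ((dfaU (A := A) start₁ * F) * Q) :=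
    mle_mul_right Q (u_le_uF step₁ start₁ step₂ start₂)
  have h2 : MLE ((dfaU (A := A) start₁ * F) * Q) (dfaU (A := A) start₁ * (P * F)) := by
    rw [Matrix.mul_assoc]
    exact mle_mul_left (dfaU start₁) hFQ
  have h3 : MLE (dfaU (A := A) start₂ * Q * dfaV accept₂)
      (dfaU (A := A) start₁ * (P * F) * dfaV accept₂) :=
    mle_mul_right (dfaV accept₂) (mle_trans h1 h2)
  refine mle_trans h3 ?_
  have h4 : MLE ((dfaU (A := A) start₁ * P) * (F * dfaV (A := A) accept₂))
      ((dfaU (A := A) start₁ * P) * dfaV (A := A) accept₁) :=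
    mle_mul_left _ (Fv_le_v step₁ start₁ accept₁ step₂ start₂ accept₂ hl)
  rw [← Matrix.mul_assoc] at h4
  rw [Matrix.mul_assoc (dfaU start₁) P F] at h4
  exact h4

end Combinatorial

/-- If two DFAs recognise the same language, then the equality of their
matricial evaluations `u·M*·v = s·N*·t` is derivable in Kleene algebra
(i.e. it holds in regular expressions modulo KA-provable equality, where
the matrix star is any operation making square matrices a Kleene algebra). -/
theorem dfa_eval_eq_of_lang_eq {A : Type} [Fintype A] [DecidableEq A]
    {n m : ℕ}
    (step₁ : Fin n → A → Fin n) (start₁ : Fin n) (accept₁ : Fin n → Bool)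
    (step₂ : Fin m → A → Fin m) (start₂ : Fin m) (accept₂ : Fin m → Bool)
    (hlang : ∀ w : List A,
      dfaAccepts step₁ start₁ accept₁ w ↔ dfaAccepts step₂ start₂ accept₂ w)
    (S₁ : Matrix (Fin n) (Fin n) (RegexQ A) → Matrix (Fin n) (Fin n) (RegexQ A))
    (S₂ : Matrix (Fin m) (Fin m) (RegexQ A) → Matrix (Fin m) (Fin m) (RegexQ A))
    (hS₁ : IsKleeneAlgebra mAdd mMul S₁ (mId (Fin n)) (mZero (Fin n) (Fin n)))
    (hS₂ : IsKleeneAlgebra mAdd mMul S₂ (mId (Fin m)) (mZero (Fin m) (Fin m))) :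
    mMul (mMul (dfaU start₁) (S₁ (dfaM step₁))) (dfaV accept₁) 0 0
      = mMul (mMul (dfaU start₂) (S₂ (dfaM step₂))) (dfaV accept₂) 0 0 := by
  have hle1 := key step₂ start₂ accept₂ step₁ start₁ accept₁
    (fun w hw => (hlang w).mp hw) S₂ S₁ hS₂ hS₁
  have hle2 := key step₁ start₁ accept₁ step₂ start₂ accept₂
    (fun w hw => (hlang w).mpr hw) S₁ S₂ hS₁ hS₂
  have heq := mle_antisymm hle2 hle1
  rw [mMul_eq, mMul_eq, mMul_eq, mMul_eq]
  exact congrFun (congrFun heq.symm 0) 0
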